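/- (Fixed-lag forgetting bound, inequality (A.14).) Assume (A1). Let 0 ≤ k, Δ ≥ 1 and n be integers with k + Δ ≤ n, and let s_k be a bounded measurable function on X². Then |φ_{ν,0:k+Δ|k+Δ} s_k − φ_{ν,0:n|n} s_k| ≤ 2 ρ^{Δ} ‖s_k‖_∞, where φ_{ν,0:m|m} s_k denotes the integral of (x_{0:m}) ↦ s_k(x_k, x_{k+1}) with respect to the joint smoothing distribution given the observations y₀,…,y_m, ‖s_k‖_∞ := sup_{x,x'} |s_k(x, x')| and ρ = 1 − σ₋/σ₊. -/

import Mathlib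

set_option linter.unusedSectionVars false
set_option maxHeartbeats 1000000

open MeasureTheory Function

noncomputable section

variable {X : Type*} [MeasurableSpace X] {Y : Type*}

/-- `LF μ q g ys n m f x` is the iterated unnormalized smoothing operator
`(L_{n-m} ⋯ L_{n-1} f)(x_{0:n-m})`, paths being represented as elements of `ℕ → X`. -/
def LF (μ : Measure X) (q : X → X → ℝ) (g : X → Y → ℝ) (ys : ℕ → Y) (n : ℕ) :
    ℕ → ((ℕ → X) → ℝ) → (ℕ → X) → ℝ
  | 0, f, x => f x
  | m + 1, f, x =>
      ∫ x', g x' (ys (n - m)) * q (x (n - m - 1)) x' *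
        LF μ q g ys n m f (Function.update x (n - m) x') ∂μ

/-- `smoothExp μ ν q g ys m f = φ_{ν,0:m|m} f`, the expectation of `f` under
the joint smoothing distribution given the observations `y₀, …, y_m`. -/
def smoothExp (μ ν : Measure X) (q : X → X → ℝ) (g : X → Y → ℝ) (ys : ℕ → Y)
    (m : ℕ) (f : (ℕ → X) → ℝ) : ℝ :=
  (∫ x₀, g x₀ (ys 0) * LF μ q g ys m m f (fun _ => x₀) ∂ν) /
    ∫ x₀, g x₀ (ys 0) * LF μ q g ys m m (fun _ => 1) (fun _ => x₀) ∂ν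

/-- Bundle of the standing assumptions. -/
structure Setup (μ : Measure X) (q : X → X → ℝ) (g : X → Y → ℝ)
    (σm σp : ℝ) : Prop where
  hσm : 0 < σm
  hσp : 0 < σp
  qm : Measurable (Function.uncurry q)
  ql : ∀ a b, σm ≤ q a b
  qu : ∀ a b, q a b ≤ σp
  gm : ∀ yv, Measurable fun x => g x yv
  g0 : ∀ x yv, 0 ≤ g x yv
  gb : ∀ yv, ∃ C, ∀ x, g x yv ≤ C
  gp : ∀ yv, 0 < ∫ x, g x yv ∂μ

/-- measurable + bounded -/
def IsMB {α : Type*} [MeasurableSpace α] (f : α → ℝ) : Prop :=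
  Measurable f ∧ ∃ C, ∀ x, |f x| ≤ C

namespace IsMB

variable {α : Type*} [MeasurableSpace α] {f h : α → ℝ}

lemma meas (hf : IsMB f) : Measurable f := hf.1

lemma integrable (hf : IsMB f) {μ' : Measure α} [IsFiniteMeasure μ'] :
    Integrable f μ' := by
  obtain ⟨C, hC⟩ := hf.2
  exact ⟨hf.1.aestronglyMeasurable,
    HasFiniteIntegral.of_bounded (C := C) (Filter.Eventually.of_forall hC)⟩

lemma const (c : ℝ) : IsMB (fun _ : α => c) :=
  ⟨measurable_const, ⟨|c|, fun _ => le_rfl⟩⟩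

lemma mul (hf : IsMB f) (hh : IsMB h) : IsMB (fun x => f x * h x) := by
  obtain ⟨C, hC⟩ := hf.2
  obtain ⟨D, hD⟩ := hh.2
  refine ⟨hf.1.mul hh.1, C * D, fun x => ?_⟩
  rw [abs_mul]
  exact mul_le_mul (hC x) (hD x) (abs_nonneg _) ((abs_nonneg _).trans (hC x))

lemma neg (hf : IsMB f) : IsMB (fun x => -f x) := by
  obtain ⟨C, hC⟩ := hf.2
  exact ⟨hf.1.neg, C, fun x => by rw [abs_neg]; exact hC x⟩

lemma add (hf : IsMB f) (hh : IsMB h) : IsMB (fun x => f x + h x) := by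
  obtain ⟨C, hC⟩ := hf.2
  obtain ⟨D, hD⟩ := hh.2
  exact ⟨hf.1.add hh.1, C + D, fun x => (abs_add_le _ _).trans (add_le_add (hC x) (hD x))⟩

lemma sub (hf : IsMB f) (hh : IsMB h) : IsMB (fun x => f x - h x) := by
  obtain ⟨C, hC⟩ := hf.2
  obtain ⟨D, hD⟩ := hh.2
  exact ⟨hf.1.sub hh.1, C + D, fun x => (abs_sub _ _).trans (add_le_add (hC x) (hD x))⟩

lemma min' (hf : IsMB f) (hh : IsMB h) : IsMB (fun x => min (f x) (h x)) := by
  obtain ⟨C, hC⟩ := hf.2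
  obtain ⟨D, hD⟩ := hh.2
  refine ⟨hf.1.min hh.1, max C D, fun x => ?_⟩
  rw [abs_le]
  constructor
  · rcases le_total (f x) (h x) with hle | hle
    · simp only [min_eq_left hle]
      have := (abs_le.mp (hC x)).1
      have hCl : -C ≤ f x := this
      exact le_trans (neg_le_neg (le_max_left C D)) hCl
    · simp only [min_eq_right hle]
      exact le_trans (neg_le_neg (le_max_right C D)) (abs_le.mp (hD x)).1
  · rcases le_total (f x) (h x) with hle | hle
    · simp only [min_eq_left hle]
      exact le_trans (abs_le.mp (hC x)).2 (le_max_left C D)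
    · simp only [min_eq_right hle]
      exact le_trans (abs_le.mp (hD x)).2 (le_max_right C D)

end IsMB

/-- boundedness+measurability for the parametric integral over the FIRST variable. -/
lemma isMB_integral_left {μ : Measure X} [IsProbabilityMeasure μ]
    (F : X → X → ℝ) (hm : Measurable (uncurry F)) (C : ℝ) (hC : ∀ u v, |F u v| ≤ C) :
    IsMB (fun v => ∫ u, F u v ∂μ) := by
  constructor
  · exact (hm.stronglyMeasurable.integral_prod_left').measurable
  · refine ⟨C, fun v => ?_⟩
    have := norm_integral_le_of_norm_le_const (μ := μ) (C := C)
      (Filter.Eventually.of_forall (fun u => (Real.norm_eq_abs _).trans_le (hC u v)))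
    simpa using this
/-- parametric integral over the SECOND variable. -/
lemma isMB_integral_right {μ : Measure X} [IsProbabilityMeasure μ]
    (F : X → X → ℝ) (hm : Measurable (uncurry F)) (C : ℝ) (hC : ∀ u v, |F u v| ≤ C) :
    IsMB (fun u => ∫ v, F u v ∂μ) := by
  constructor
  · exact (hm.stronglyMeasurable.integral_prod_right').measurable
  · refine ⟨C, fun u => ?_⟩
    have := norm_integral_le_of_norm_le_const (μ := μ) (C := C)
      (Filter.Eventually.of_forall (fun v => (Real.norm_eq_abs _).trans_le (hC u v)))
    simpa using this

/-- two-variable measurable + bounded -/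
def IsMB2 (F : X → X → ℝ) : Prop :=
  Measurable (uncurry F) ∧ ∃ C, ∀ u v, |F u v| ≤ C

section Filt

variable (μ ν : Measure X) (q : X → X → ℝ) (g : X → Y → ℝ) (ys : ℕ → Y)

/-- unnormalized forward (prediction-style) functional. -/
def filt : ℕ → (X → ℝ) → ℝ
  | 0, h => ∫ x, g x (ys 0) * h x ∂ν
  | i + 1, h => filt i (fun u => ∫ v, g v (ys (i + 1)) * q u v * h v ∂μ)

variable {μ ν q g ys}
variable [IsProbabilityMeasure μ] [IsProbabilityMeasure ν]
variable {σm σp : ℝ}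

lemma Setup.q_nonneg (S : Setup μ q g σm σp) (a b : X) : 0 ≤ q a b :=
  le_of_lt (lt_of_lt_of_le S.hσm (S.ql a b))

lemma Setup.q_abs (S : Setup μ q g σm σp) (a b : X) : |q a b| ≤ σp := by
  rw [abs_of_nonneg (S.q_nonneg a b)]; exact S.qu a b

lemma Setup.gMB (S : Setup μ q g σm σp) (yv : Y) : IsMB (fun x => g x yv) := by
  obtain ⟨C, hC⟩ := S.gb yv
  exact ⟨S.gm yv, C, fun x => by rw [abs_of_nonneg (S.g0 x yv)]; exact hC x⟩

lemma Setup.quMB (S : Setup μ q g σm σp) (u : X) : IsMB (fun v => q u v) :=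
  ⟨S.qm.comp measurable_prodMk_left, σp, fun v => S.q_abs u v⟩

/-- the integrand of one `filt` step, as a function of the inner variable. -/
lemma Setup.stepInner_isMB (S : Setup μ q g σm σp) (yv : Y) (u : X)
    {h : X → ℝ} (hh : IsMB h) :
    IsMB (fun v => g v yv * q u v * h v) :=
  ((S.gMB yv).mul (S.quMB u)).mul hh

lemma Setup.step_isMB (S : Setup μ q g σm σp) (yv : Y)
    {h : X → ℝ} (hh : IsMB h) :
    IsMB (fun u => ∫ v, g v yv * q u v * h v ∂μ) := by
  obtain ⟨Cg, hCg⟩ := (S.gMB yv).2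
  obtain ⟨Ch, hCh⟩ := hh.2
  apply isMB_integral_right (μ := μ) (fun u v => g v yv * q u v * h v)
    (((S.gm yv).comp measurable_snd).mul S.qm |>.mul (hh.meas.comp measurable_snd))
    (Cg * σp * Ch)
  intro u v
  have hCg0 : 0 ≤ Cg := le_trans (abs_nonneg _) (hCg v)
  rw [abs_mul, abs_mul]
  exact mul_le_mul (mul_le_mul (hCg v) (S.q_abs u v) (abs_nonneg _) hCg0)
    (hCh v) (abs_nonneg _) (mul_nonneg hCg0 (le_of_lt S.hσp))

lemma filt_mono (S : Setup μ q g σm σp) :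
    ∀ (i : ℕ) (h₁ h₂ : X → ℝ), IsMB h₁ → IsMB h₂ → (∀ x, h₁ x ≤ h₂ x) →
      filt μ ν q g ys i h₁ ≤ filt μ ν q g ys i h₂ := by
  intro i
  induction i with
  | zero =>
    intro h₁ h₂ hm1 hm2 hle
    simp only [filt]
    apply integral_mono ((S.gMB (ys 0)).mul hm1).integrable
      ((S.gMB (ys 0)).mul hm2).integrable
    intro x
    exact mul_le_mul_of_nonneg_left (hle x) (S.g0 x (ys 0))
  | succ i ih =>
    intro h₁ h₂ hm1 hm2 hle
    simp only [filt]
    apply ih _ _ (S.step_isMB _ hm1) (S.step_isMB _ hm2)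
    intro u
    apply integral_mono (S.stepInner_isMB _ u hm1).integrable
      (S.stepInner_isMB _ u hm2).integrable
    intro v
    exact mul_le_mul_of_nonneg_left (hle v)
      (mul_nonneg (S.g0 v _) (S.q_nonneg u v))

lemma filt_const_mul (S : Setup μ q g σm σp) :
    ∀ (i : ℕ) (c : ℝ) (h : X → ℝ), IsMB h →
      filt μ ν q g ys i (fun x => c * h x) = c * filt μ ν q g ys i h := by
  intro i
  induction i with
  | zero =>
    intro c h hh
    simp only [filt]
    rw [← integral_const_mul]
    congr 1; funext x; ring
  | succ i ih =>
    intro c h hh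
    simp only [filt]
    have : (fun u => ∫ v, g v (ys (i + 1)) * q u v * (c * h v) ∂μ) =
        (fun u => c * ∫ v, g v (ys (i + 1)) * q u v * h v ∂μ) := by
      funext u
      rw [← integral_const_mul]
      congr 1; funext v; ring
    rw [this, ih c _ (S.step_isMB _ hh)]

lemma filt_zero (S : Setup μ q g σm σp) (i : ℕ) :
    filt μ ν q g ys i (fun _ => (0 : ℝ)) = 0 := by
  have := filt_const_mul (ν := ν) (ys := ys) S i 0 (fun _ => (1 : ℝ)) (IsMB.const 1)
  simpa using this

lemma filt_nonneg (S : Setup μ q g σm σp) (i : ℕ) {h : X → ℝ} (hh : IsMB h)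
    (h0 : ∀ x, 0 ≤ h x) : 0 ≤ filt μ ν q g ys i h := by
  rw [← filt_zero (ν := ν) (ys := ys) S i]
  exact filt_mono S i _ h (IsMB.const 0) hh h0

lemma filt_abs_le (S : Setup μ q g σm σp) (i : ℕ) {h h' : X → ℝ}
    (hh : IsMB h) (hh' : IsMB h') (hd : ∀ x, |h x| ≤ h' x) :
    |filt μ ν q g ys i h| ≤ filt μ ν q g ys i h' := by
  rw [abs_le]
  constructor
  · have hneg : IsMB (fun x => (-1 : ℝ) * h x) :=
      ⟨measurable_const.mul hh.meas, hh.2.imp (fun C hC x => by simpa using hC x)⟩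
    have h2 : filt μ ν q g ys i (fun x => (-1 : ℝ) * h x) ≤ filt μ ν q g ys i h' := by
      apply filt_mono S i _ _ hneg hh'
      intro x
      have h3 := neg_abs_le (h x)
      have h4 := hd x
      simp only [neg_one_mul]
      linarith
    rw [filt_const_mul S i (-1) h hh] at h2
    linarith
  · exact filt_mono S i h h' hh hh' (fun x => le_of_abs_le (hd x))

/-- positivity of `filt` applied to the constant function 1 (when the initial
integral is positive). -/
lemma filt_one_pos (S : Setup μ q g σm σp) (hν0 : 0 < ∫ x, g x (ys 0) ∂ν) :
    ∀ i, 0 < filt μ ν q g ys i (fun _ => (1 : ℝ)) := by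
  intro i
  induction i with
  | zero => simp only [filt, mul_one]; exact hν0
  | succ i ih =>
    simp only [filt]
    have hc : 0 < σm * ∫ v, g v (ys (i + 1)) ∂μ := mul_pos S.hσm (S.gp _)
    have h1 : filt μ ν q g ys i (fun _ => σm * ∫ v, g v (ys (i + 1)) ∂μ) ≤
        filt μ ν q g ys i (fun u => ∫ v, g v (ys (i + 1)) * q u v * 1 ∂μ) := by
      apply filt_mono S i _ _ (IsMB.const _) (S.step_isMB _ (IsMB.const 1))
      intro u
      have : ∀ v, g v (ys (i + 1)) * σm ≤ g v (ys (i + 1)) * q u v * 1 := by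
        intro v
        rw [mul_one]
        exact mul_le_mul_of_nonneg_left (S.ql u v) (S.g0 v _)
      calc σm * ∫ v, g v (ys (i + 1)) ∂μ = ∫ v, g v (ys (i + 1)) * σm ∂μ := by
            rw [integral_mul_const]; ring
        _ ≤ ∫ v, g v (ys (i + 1)) * q u v * 1 ∂μ := by
            apply integral_mono ((S.gMB _).mul (IsMB.const σm)).integrable ?_ this
            have := S.stepInner_isMB (ys (i + 1)) u (IsMB.const 1)
            exact this.integrable
    have h2 : filt μ ν q g ys i (fun _ => σm * ∫ v, g v (ys (i + 1)) ∂μ) =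
        (σm * ∫ v, g v (ys (i + 1)) ∂μ) * filt μ ν q g ys i (fun _ => (1 : ℝ)) := by
      have := filt_const_mul (ν := ν) (ys := ys) S i (σm * ∫ v, g v (ys (i + 1)) ∂μ)
        (fun _ => (1 : ℝ)) (IsMB.const 1)
      simpa using this
    calc (0 : ℝ) < (σm * ∫ v, g v (ys (i + 1)) ∂μ) * filt μ ν q g ys i (fun _ => (1 : ℝ)) :=
          mul_pos hc ih
      _ = filt μ ν q g ys i (fun _ => σm * ∫ v, g v (ys (i + 1)) ∂μ) := h2.symm
      _ ≤ _ := h1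

end Filt

lemma abs_mul3_le {a b c A B C : ℝ} (ha : |a| ≤ A) (hb : |b| ≤ B) (hc : |c| ≤ C) :
    |a * b * c| ≤ A * B * C := by
  have hA : 0 ≤ A := le_trans (abs_nonneg _) ha
  have hB : 0 ≤ B := le_trans (abs_nonneg _) hb
  rw [abs_mul, abs_mul]
  exact mul_le_mul (mul_le_mul ha hb (abs_nonneg _) hA) hc (abs_nonneg _) (mul_nonneg hA hB)

section TVCore

lemma nonempty_of_prob (μ : Measure X) [IsProbabilityMeasure μ] : Nonempty X := by
  by_contra h
  rw [not_nonempty_iff] at h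
  have h1 : μ Set.univ = 1 := measure_univ
  rw [Set.univ_eq_empty_iff.mpr h] at h1
  simp at h1

lemma IsMB.div_const' {f : X → ℝ} (hf : IsMB f) (c : ℝ) : IsMB (fun x => f x / c) := by
  obtain ⟨C, hC⟩ := hf.2
  refine ⟨hf.1.div_const c, C * |c|⁻¹, fun x => ?_⟩
  dsimp only
  rw [div_eq_mul_inv, abs_mul, abs_inv]
  exact mul_le_mul_of_nonneg_right (hC x) (inv_nonneg.mpr (abs_nonneg _))

lemma IsMB.abs' {f : X → ℝ} (hf : IsMB f) : IsMB (fun x => |f x|) := by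
  obtain ⟨C, hC⟩ := hf.2
  exact ⟨hf.1.abs, C, fun x => by rw [abs_abs]; exact hC x⟩

lemma abs_sub_eq_add_sub_two_min (a b : ℝ) : |a - b| = a + b - 2 * min a b := by
  rcases le_total a b with h | h
  · rw [abs_of_nonpos (by linarith), min_eq_left h]; ring
  · rw [abs_of_nonneg (by linarith), min_eq_right h]; ring

variable {μ : Measure X} [IsProbabilityMeasure μ]

/-- Core contraction estimate: two tilted expectations of a function `H` of
oscillation `≤ D`, with tilting functions having Doeblin-type ratio bound. -/
lemma tv_core {P γ₁ γ₂ H : X → ℝ} {ρ D : ℝ}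
    (hP : IsMB P) (hP0 : ∀ x, 0 ≤ P x)
    (hγ₁ : IsMB γ₁) (hγ₂ : IsMB γ₂)
    (hH : IsMB H)
    (hρ0 : 0 ≤ ρ) (hρ1 : ρ < 1)
    (hr₁ : ∀ x y, (1 - ρ) * γ₁ y ≤ γ₁ x) (hr₂ : ∀ x y, (1 - ρ) * γ₂ y ≤ γ₂ x)
    (hZ₁ : 0 < ∫ x, P x * γ₁ x ∂μ) (hZ₂ : 0 < ∫ x, P x * γ₂ x ∂μ)
    (hD : ∀ x y, |H x - H y| ≤ D) :
    |(∫ x, P x * γ₁ x * H x ∂μ) / (∫ x, P x * γ₁ x ∂μ) -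
      (∫ x, P x * γ₂ x * H x ∂μ) / (∫ x, P x * γ₂ x ∂μ)| ≤ ρ * D := by
  have hXne : Nonempty X := nonempty_of_prob μ
  obtain ⟨x₀⟩ := hXne
  have hne : (1 : ℝ) - ρ ≠ 0 := by linarith
  set Z1 := ∫ x, P x * γ₁ x ∂μ with hZ1def
  set Z2 := ∫ x, P x * γ₂ x ∂μ with hZ2def
  set Z0 := ∫ x, P x ∂μ with hZ0def
  have hZ1ne : Z1 ≠ 0 := ne_of_gt hZ₁
  have hZ2ne : Z2 ≠ 0 := ne_of_gt hZ₂
  have hZ0nn : 0 ≤ Z0 := integral_nonneg hP0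
  have hZ0 : 0 < Z0 := by
    obtain ⟨C1, hC1⟩ := hγ₁.2
    have hb : Z1 ≤ C1 * Z0 := by
      rw [hZ1def, hZ0def, ← integral_const_mul]
      apply integral_mono (hP.mul hγ₁).integrable
        ((IsMB.const C1).mul hP).integrable
      intro x
      calc P x * γ₁ x ≤ P x * C1 :=
            mul_le_mul_of_nonneg_left (le_trans (le_abs_self _) (hC1 x)) (hP0 x)
        _ = C1 * P x := by ring
    rcases lt_or_eq_of_le hZ0nn with h | h
    · exact h
    · exfalso
      rw [← h, mul_zero] at hb
      linarith
  have hZ0ne : Z0 ≠ 0 := ne_of_gt hZ0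
  have hD0 : 0 ≤ D := le_trans (abs_nonneg _) (hD x₀ x₀)
  obtain ⟨CH, hCH⟩ := hH.2
  have hbdd : BddBelow (Set.range H) := by
    refine ⟨-CH, fun y hy => ?_⟩
    obtain ⟨x, hx⟩ := hy
    rw [← hx]
    exact (abs_le.mp (hCH x)).1
  have hrne : (Set.range H).Nonempty := ⟨H x₀, x₀, rfl⟩
  set c := sInf (Set.range H) + D / 2 with hcdef
  have hc : ∀ x, |H x - c| ≤ D / 2 := by
    intro x
    rw [abs_le]
    constructor
    · have : sInf (Set.range H) ≤ H x := csInf_le hbdd ⟨x, rfl⟩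
      rw [hcdef]; linarith
    · have : H x - D ≤ sInf (Set.range H) := by
        apply le_csInf hrne
        rintro b ⟨y, rfl⟩
        have := (abs_le.mp (hD x y)).2
        linarith
      rw [hcdef]; linarith
  -- lower bound for the normalized tilting densities
  have hminlb : ∀ x, (1 - ρ) / Z0 ≤ min (γ₁ x / Z1) (γ₂ x / Z2) := by
    intro x
    rw [le_min_iff]
    constructor
    · rw [div_le_div_iff₀ hZ0 hZ₁]
      have hZb : Z1 ≤ γ₁ x / (1 - ρ) * Z0 := by
        rw [hZ1def, hZ0def, ← integral_const_mul]
        apply integral_mono (hP.mul hγ₁).integrable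
          ((IsMB.const _).mul hP).integrable
        intro z
        calc P z * γ₁ z ≤ P z * (γ₁ x / (1 - ρ)) := by
              apply mul_le_mul_of_nonneg_left _ (hP0 z)
              rw [le_div_iff₀ (by linarith)]
              calc γ₁ z * (1 - ρ) = (1 - ρ) * γ₁ z := by ring
                _ ≤ γ₁ x := hr₁ x z
          _ = γ₁ x / (1 - ρ) * P z := by ring
      have h2 := mul_le_mul_of_nonneg_left hZb (by linarith : (0:ℝ) ≤ 1 - ρ)
      calc (1 - ρ) * Z1 ≤ (1 - ρ) * (γ₁ x / (1 - ρ) * Z0) := h2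
        _ = γ₁ x * Z0 := by field_simp
    · rw [div_le_div_iff₀ hZ0 hZ₂]
      have hZb : Z2 ≤ γ₂ x / (1 - ρ) * Z0 := by
        rw [hZ2def, hZ0def, ← integral_const_mul]
        apply integral_mono (hP.mul hγ₂).integrable
          ((IsMB.const _).mul hP).integrable
        intro z
        calc P z * γ₂ z ≤ P z * (γ₂ x / (1 - ρ)) := by
              apply mul_le_mul_of_nonneg_left _ (hP0 z)
              rw [le_div_iff₀ (by linarith)]
              calc γ₂ z * (1 - ρ) = (1 - ρ) * γ₂ z := by ring
                _ ≤ γ₂ x := hr₂ x z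
          _ = γ₂ x / (1 - ρ) * P z := by ring
      have h2 := mul_le_mul_of_nonneg_left hZb (by linarith : (0:ℝ) ≤ 1 - ρ)
      calc (1 - ρ) * Z2 ≤ (1 - ρ) * (γ₂ x / (1 - ρ) * Z0) := h2
        _ = γ₂ x * Z0 := by field_simp
  have i1 : Integrable (fun x => 1 / Z1 * (P x * γ₁ x * H x)) μ :=
    (((hP.mul hγ₁).mul hH).integrable).const_mul _
  have i2 : Integrable (fun x => 1 / Z2 * (P x * γ₂ x * H x)) μ :=
    (((hP.mul hγ₂).mul hH).integrable).const_mul _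
  have i3 : Integrable (fun x => c / Z1 * (P x * γ₁ x)) μ :=
    ((hP.mul hγ₁).integrable).const_mul _
  have i4 : Integrable (fun x => c / Z2 * (P x * γ₂ x)) μ :=
    ((hP.mul hγ₂).integrable).const_mul _
  have i12 : Integrable (fun x => 1 / Z1 * (P x * γ₁ x * H x)
      - 1 / Z2 * (P x * γ₂ x * H x)) μ := i1.sub i2
  have i34 : Integrable (fun x => c / Z1 * (P x * γ₁ x)
      - c / Z2 * (P x * γ₂ x)) μ := i3.sub i4
  -- key identity
  have hkey : (∫ x, P x * γ₁ x * H x ∂μ) / Z1 - (∫ x, P x * γ₂ x * H x ∂μ) / Z2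
      = ∫ x, P x * (H x - c) * (γ₁ x / Z1 - γ₂ x / Z2) ∂μ := by
    have hfe : (fun x => P x * (H x - c) * (γ₁ x / Z1 - γ₂ x / Z2)) =
        (fun x => (1 / Z1 * (P x * γ₁ x * H x) - 1 / Z2 * (P x * γ₂ x * H x))
          - (c / Z1 * (P x * γ₁ x) - c / Z2 * (P x * γ₂ x))) := by
      funext x
      field_simp
    rw [hfe, integral_sub i12 i34, integral_sub i1 i2, integral_sub i3 i4,
      integral_const_mul, integral_const_mul, integral_const_mul, integral_const_mul,
      ← hZ1def, ← hZ2def]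
    field_simp
    ring
  -- bound on the total variation part
  have htv : (∫ x, P x * |γ₁ x / Z1 - γ₂ x / Z2| ∂μ) ≤ 2 * ρ := by
    have hmineq : (fun x => P x * |γ₁ x / Z1 - γ₂ x / Z2|) =
        (fun x => (1 / Z1 * (P x * γ₁ x) + 1 / Z2 * (P x * γ₂ x))
          - 2 * (P x * min (γ₁ x / Z1) (γ₂ x / Z2))) := by
      funext x
      rw [abs_sub_eq_add_sub_two_min]
      field_simp
    have hMmin : IsMB (fun x => P x * min (γ₁ x / Z1) (γ₂ x / Z2)) :=
      hP.mul ((hγ₁.div_const' Z1).min' (hγ₂.div_const' Z2))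
    have i5 : Integrable (fun x => 1 / Z1 * (P x * γ₁ x)) μ :=
      ((hP.mul hγ₁).integrable).const_mul _
    have i6 : Integrable (fun x => 1 / Z2 * (P x * γ₂ x)) μ :=
      ((hP.mul hγ₂).integrable).const_mul _
    have i56 : Integrable (fun x => 1 / Z1 * (P x * γ₁ x) + 1 / Z2 * (P x * γ₂ x)) μ :=
      i5.add i6
    have i7 : Integrable (fun x => 2 * (P x * min (γ₁ x / Z1) (γ₂ x / Z2))) μ :=
      hMmin.integrable.const_mul _
    rw [hmineq, integral_sub i56 i7, integral_add i5 i6,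
      integral_const_mul, integral_const_mul, integral_const_mul, ← hZ1def, ← hZ2def]
    have hminint : (1 - ρ) ≤ ∫ x, P x * min (γ₁ x / Z1) (γ₂ x / Z2) ∂μ := by
      have h1 : (∫ x, (1 - ρ) / Z0 * P x ∂μ) ≤ ∫ x, P x * min (γ₁ x / Z1) (γ₂ x / Z2) ∂μ := by
        apply integral_mono ((IsMB.const _).mul hP).integrable hMmin.integrable
        intro x
        calc (1 - ρ) / Z0 * P x = P x * ((1 - ρ) / Z0) := by ring
          _ ≤ P x * min (γ₁ x / Z1) (γ₂ x / Z2) :=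
              mul_le_mul_of_nonneg_left (hminlb x) (hP0 x)
      rw [integral_const_mul, ← hZ0def] at h1
      calc (1 - ρ) = (1 - ρ) / Z0 * Z0 := by field_simp
        _ ≤ _ := h1
    have e1 : 1 / Z1 * Z1 = 1 := by field_simp
    have e2 : 1 / Z2 * Z2 = 1 := by field_simp
    rw [e1, e2]
    linarith
  rw [hkey]
  have hMfull : IsMB (fun x => P x * (H x - c) * (γ₁ x / Z1 - γ₂ x / Z2)) :=
    (hP.mul (hH.sub (IsMB.const c))).mul
      ((hγ₁.div_const' Z1).sub (hγ₂.div_const' Z2))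
  have hMd : IsMB (fun x => P x * |γ₁ x / Z1 - γ₂ x / Z2|) :=
    hP.mul ((hγ₁.div_const' Z1).sub (hγ₂.div_const' Z2)).abs'
  calc |∫ x, P x * (H x - c) * (γ₁ x / Z1 - γ₂ x / Z2) ∂μ|
      ≤ ∫ x, |P x * (H x - c) * (γ₁ x / Z1 - γ₂ x / Z2)| ∂μ := by
        simpa only [Real.norm_eq_abs] using
          norm_integral_le_integral_norm (μ := μ)
            (fun x => P x * (H x - c) * (γ₁ x / Z1 - γ₂ x / Z2))
    _ ≤ ∫ x, D / 2 * (P x * |γ₁ x / Z1 - γ₂ x / Z2|) ∂μ := by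
        apply integral_mono hMfull.abs'.integrable
          ((IsMB.const (D / 2)).mul hMd).integrable
        intro x
        dsimp only
        rw [abs_mul, abs_mul, abs_of_nonneg (hP0 x)]
        calc P x * |H x - c| * |γ₁ x / Z1 - γ₂ x / Z2|
            ≤ P x * (D / 2) * |γ₁ x / Z1 - γ₂ x / Z2| :=
              mul_le_mul_of_nonneg_right
                (mul_le_mul_of_nonneg_left (hc x) (hP0 x)) (abs_nonneg _)
          _ = D / 2 * (P x * |γ₁ x / Z1 - γ₂ x / Z2|) := by ring
    _ = D / 2 * ∫ x, P x * |γ₁ x / Z1 - γ₂ x / Z2| ∂μ := integral_const_mul _ _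
    _ ≤ D / 2 * (2 * ρ) := mul_le_mul_of_nonneg_left htv (by linarith)
    _ = ρ * D := by ring

end TVCore

section Swap

variable {μ ν : Measure X} [IsProbabilityMeasure μ] [IsProbabilityMeasure ν]
variable {q : X → X → ℝ} {g : X → Y → ℝ} {ys : ℕ → Y} {σm σp : ℝ}

/-- one inner step applied to a two-variable function (parameter in second slot). -/
def Fstep (μ : Measure X) (q : X → X → ℝ) (g : X → Y → ℝ) (yv : Y) (F : X → X → ℝ) :
    X → X → ℝ :=
  fun u v => ∫ w, g w yv * q u w * F w v ∂μ

lemma Setup.isMB2_stepfun (S : Setup μ q g σm σp) (yv : Y) {F : X → X → ℝ}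
    (hF : IsMB2 F) : IsMB2 (Fstep μ q g yv F) := by
  obtain ⟨Cg, hCg⟩ := (S.gMB yv).2
  obtain ⟨C, hC⟩ := hF.2
  constructor
  · have hm : Measurable (fun r : (X × X) × X => g r.2 yv * q r.1.1 r.2 * F r.2 r.1.2) := by
      apply Measurable.mul
      · apply Measurable.mul
        · exact (S.gm yv).comp measurable_snd
        · exact S.qm.comp ((measurable_fst.comp measurable_fst).prodMk measurable_snd)
      · exact hF.1.comp (measurable_snd.prodMk ((measurable_snd.comp measurable_fst)))
    exact hm.stronglyMeasurable.integral_prod_right'.measurable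
  · refine ⟨Cg * σp * C, fun u v => ?_⟩
    have hb : ∀ w, ‖g w yv * q u w * F w v‖ ≤ Cg * σp * C := by
      intro w
      rw [Real.norm_eq_abs]
      exact abs_mul3_le (hCg w) (S.q_abs u w) (hC w v)
    have := norm_integral_le_of_norm_le_const (μ := μ) (Filter.Eventually.of_forall hb)
    calc |Fstep μ q g yv F u v| = ‖∫ w, g w yv * q u w * F w v ∂μ‖ := by
          rw [Real.norm_eq_abs]; rfl
      _ ≤ Cg * σp * C * (μ Set.univ).toReal := this
      _ = Cg * σp * C := by simp

lemma filt_param (S : Setup μ q g σm σp) :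
    ∀ (i : ℕ) {F : X → X → ℝ}, IsMB2 F →
      IsMB (fun v => filt μ ν q g ys i (fun u => F u v)) := by
  intro i
  induction i with
  | zero =>
    intro F hF
    obtain ⟨Cg, hCg⟩ := (S.gMB (ys 0)).2
    obtain ⟨C, hC⟩ := hF.2
    have h := isMB_integral_left (μ := ν) (fun u v => g u (ys 0) * F u v)
      (((S.gm _).comp measurable_fst).mul hF.1) (Cg * C) ?_
    · exact h
    · intro u v
      rw [abs_mul]
      exact mul_le_mul (hCg u) (hC u v) (abs_nonneg _) (le_trans (abs_nonneg _) (hCg u))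
  | succ i ih =>
    intro F hF
    exact ih (S.isMB2_stepfun (ys (i + 1)) hF)

lemma filt_swap (S : Setup μ q g σm σp) :
    ∀ (i : ℕ) {F : X → X → ℝ}, IsMB2 F →
      filt μ ν q g ys i (fun u => ∫ v, F u v ∂μ) =
        ∫ v, filt μ ν q g ys i (fun u => F u v) ∂μ := by
  intro i
  induction i with
  | zero =>
    intro F hF
    obtain ⟨Cg, hCg⟩ := (S.gMB (ys 0)).2
    obtain ⟨C, hC⟩ := hF.2
    show (∫ x, g x (ys 0) * ∫ v, F x v ∂μ ∂ν) = ∫ v, ∫ x, g x (ys 0) * F x v ∂ν ∂μ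
    have h1 : (fun x => g x (ys 0) * ∫ v, F x v ∂μ) =
        fun x => ∫ v, g x (ys 0) * F x v ∂μ := by
      funext x; rw [integral_const_mul]
    rw [h1]
    have hI : Integrable (uncurry (fun x v => g x (ys 0) * F x v)) (ν.prod μ) := by
      have hMB : IsMB (fun p : X × X => g p.1 (ys 0) * F p.1 p.2) := by
        refine ⟨((S.gm _).comp measurable_fst).mul hF.1, Cg * C, fun p => ?_⟩
        rw [abs_mul]
        exact mul_le_mul (hCg p.1) (hC p.1 p.2) (abs_nonneg _)
          (le_trans (abs_nonneg _) (hCg p.1))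
      exact hMB.integrable
    exact integral_integral_swap hI
  | succ i ih =>
    intro F hF
    have heq1 : (fun u => ∫ w, g w (ys (i + 1)) * q u w * (∫ v, F w v ∂μ) ∂μ)
        = fun u => ∫ v, Fstep μ q g (ys (i + 1)) F u v ∂μ := by
      funext u
      obtain ⟨Cg, hCg⟩ := (S.gMB (ys (i + 1))).2
      obtain ⟨C, hC⟩ := hF.2
      have h2 : (fun w => g w (ys (i + 1)) * q u w * ∫ v, F w v ∂μ)
          = fun w => ∫ v, g w (ys (i + 1)) * q u w * F w v ∂μ := by
        funext w; rw [integral_const_mul]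
      rw [h2]
      have hI : Integrable (uncurry (fun w v => g w (ys (i + 1)) * q u w * F w v))
          (μ.prod μ) := by
        have hMB : IsMB (fun p : X × X => g p.1 (ys (i + 1)) * q u p.1 * F p.1 p.2) := by
          refine ⟨(((S.gm _).comp measurable_fst).mul
            (S.qm.comp (measurable_const.prodMk measurable_fst))).mul hF.1,
            Cg * σp * C, fun p => ?_⟩
          exact abs_mul3_le (hCg p.1) (S.q_abs u p.1) (hC p.1 p.2)
        exact hMB.integrable
      exact integral_integral_swap hI
    calc filt μ ν q g ys (i + 1) (fun u => ∫ v, F u v ∂μ)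
        = filt μ ν q g ys i
            (fun u => ∫ w, g w (ys (i + 1)) * q u w * (∫ v, F w v ∂μ) ∂μ) := rfl
      _ = filt μ ν q g ys i (fun u => ∫ v, Fstep μ q g (ys (i + 1)) F u v ∂μ) := by
          rw [heq1]
      _ = ∫ v, filt μ ν q g ys i (fun u => Fstep μ q g (ys (i + 1)) F u v) ∂μ :=
          ih (S.isMB2_stepfun _ hF)
      _ = ∫ v, filt μ ν q g ys (i + 1) (fun u => F u v) ∂μ := rfl

end Swap

section Bwg

variable (μ : Measure X) (q : X → X → ℝ) (g : X → Y → ℝ) (ys : ℕ → Y)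

/-- generalized backward function with terminal condition `γ`:
`j` remaining steps, current time index `i`. -/
def bwg (γ : X → ℝ) : ℕ → ℕ → X → ℝ
  | 0, _, x => γ x
  | j + 1, i, x => ∫ v, g v (ys (i + 1)) * q x v * bwg γ j (i + 1) v ∂μ

variable {μ q g ys}
variable [IsProbabilityMeasure μ] {σm σp : ℝ}

lemma bwg_isMB (S : Setup μ q g σm σp) {γ : X → ℝ} (hγ : IsMB γ) :
    ∀ (j i : ℕ), IsMB (bwg μ q g ys γ j i) := by
  intro j
  induction j with
  | zero => intro i; exact hγ
  | succ j ih =>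
    intro i
    simpa [bwg] using S.step_isMB (μ := μ) (ys (i + 1)) (ih (i + 1))

lemma bwg_nonneg (S : Setup μ q g σm σp) {γ : X → ℝ} (hγ0 : ∀ x, 0 ≤ γ x) :
    ∀ (j i : ℕ) (x : X), 0 ≤ bwg μ q g ys γ j i x := by
  intro j
  induction j with
  | zero => intro i x; exact hγ0 x
  | succ j ih =>
    intro i x
    simp only [bwg]
    apply integral_nonneg
    intro v
    exact mul_nonneg (mul_nonneg (S.g0 _ _) (S.q_nonneg _ _)) (ih (i + 1) v)

lemma bwg_pos (S : Setup μ q g σm σp) :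
    ∀ (j i : ℕ), ∃ c > 0, ∀ x, c ≤ bwg μ q g ys (fun _ => (1 : ℝ)) j i x := by
  intro j
  induction j with
  | zero => intro i; exact ⟨1, one_pos, fun x => le_refl _⟩
  | succ j ih =>
    intro i
    obtain ⟨c, hc, hcle⟩ := ih (i + 1)
    refine ⟨σm * c * ∫ v, g v (ys (i + 1)) ∂μ,
      mul_pos (mul_pos S.hσm hc) (S.gp _), fun x => ?_⟩
    simp only [bwg]
    calc σm * c * ∫ v, g v (ys (i + 1)) ∂μ = ∫ v, g v (ys (i + 1)) * (σm * c) ∂μ := by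
          rw [integral_mul_const]; ring
      _ ≤ ∫ v, g v (ys (i + 1)) * q x v * bwg μ q g ys (fun _ => 1) j (i + 1) v ∂μ := by
          apply integral_mono ((S.gMB _).mul (IsMB.const _)).integrable
            (S.stepInner_isMB _ x (bwg_isMB S (IsMB.const 1) j (i + 1))).integrable
          intro v
          dsimp only
          rw [mul_assoc]
          apply mul_le_mul_of_nonneg_left _ (S.g0 v _)
          calc σm * c ≤ q x v * bwg μ q g ys (fun _ => 1) j (i + 1) v :=
              mul_le_mul (S.ql x v) (hcle v) (le_of_lt hc) (S.q_nonneg x v)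
            _ = _ := rfl

lemma bwg_ratio (S : Setup μ q g σm σp) :
    ∀ (j i : ℕ) (x y : X),
      (σm / σp) * bwg μ q g ys (fun _ => (1 : ℝ)) j i y ≤
        bwg μ q g ys (fun _ => (1 : ℝ)) j i x := by
  intro j
  induction j with
  | zero =>
    intro i x y
    simp only [bwg]
    rw [mul_one]
    rw [div_le_one S.hσp]
    exact le_trans (S.ql x y) (S.qu x y)
  | succ j ih =>
    intro i x y
    simp only [bwg]
    rw [← integral_const_mul]
    apply integral_mono
    · have h := S.stepInner_isMB (μ := μ) (ys (i + 1)) y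
        (bwg_isMB (ys := ys) S (IsMB.const 1) j (i + 1))
      exact (IsMB.mul (IsMB.const (σm / σp)) h).integrable
    · exact (S.stepInner_isMB _ x (bwg_isMB S (IsMB.const 1) j (i + 1))).integrable
    intro v
    have hB0 : 0 ≤ bwg μ q g ys (fun _ => 1) j (i + 1) v := bwg_nonneg S (fun _ => zero_le_one) j (i + 1) v
    have hq : (σm / σp) * q y v ≤ q x v := by
      calc (σm / σp) * q y v ≤ (σm / σp) * σp :=
            mul_le_mul_of_nonneg_left (S.qu y v) (div_nonneg (le_of_lt S.hσm) (le_of_lt S.hσp))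
        _ = σm := div_mul_cancel₀ σm (ne_of_gt S.hσp)
        _ ≤ q x v := S.ql x v
    calc (σm / σp) * (g v (ys (i + 1)) * q y v * bwg μ q g ys (fun _ => 1) j (i + 1) v)
        = g v (ys (i + 1)) * ((σm / σp) * q y v) * bwg μ q g ys (fun _ => 1) j (i + 1) v := by ring
      _ ≤ g v (ys (i + 1)) * q x v * bwg μ q g ys (fun _ => 1) j (i + 1) v := by
          apply mul_le_mul_of_nonneg_right _ hB0
          exact mul_le_mul_of_nonneg_left hq (S.g0 v _)

lemma bwg_split (S : Setup μ q g σm σp) :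
    ∀ (j j' i : ℕ),
      bwg μ q g ys (fun _ => (1 : ℝ)) (j + j') i =
        bwg μ q g ys (bwg μ q g ys (fun _ => (1 : ℝ)) j' (i + j)) j i := by
  intro j
  induction j with
  | zero => intro j' i; simp [bwg]
  | succ j ih =>
    intro j' i
    have harith : j + 1 + j' = (j + j') + 1 := by omega
    rw [harith]
    funext x
    simp only [bwg]
    congr 1
    funext v
    have harith2 : i + 1 + j = i + (j + 1) := by omega
    rw [ih j' (i + 1), harith2]

end Bwg

section AlphaH

def alphaF (μ ν : Measure X) (q : X → X → ℝ) (g : X → Y → ℝ) (ys : ℕ → Y)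
    (k : ℕ) : ℕ → X → ℝ
  | 0 => fun v => g v (ys (k + 1)) * filt μ ν q g ys k (fun u => q u v)
  | t + 1 => fun v => g v (ys (k + 1 + t + 1)) * ∫ u, alphaF μ ν q g ys k t u * q u v ∂μ

def HFun (μ ν : Measure X) (q : X → X → ℝ) (g : X → Y → ℝ) (ys : ℕ → Y)
    (s : X → X → ℝ) (k : ℕ) : ℕ → X → ℝ
  | 0 => fun v => filt μ ν q g ys k (fun u => q u v * s u v) /
      filt μ ν q g ys k (fun u => q u v)
  | t + 1 => fun v => (∫ u, alphaF μ ν q g ys k t u * q u v * HFun μ ν q g ys s k t u ∂μ) /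
      (∫ u, alphaF μ ν q g ys k t u * q u v ∂μ)

variable {μ ν : Measure X} [IsProbabilityMeasure μ] [IsProbabilityMeasure ν]
variable {q : X → X → ℝ} {g : X → Y → ℝ} {ys : ℕ → Y} {σm σp : ℝ} {k : ℕ}

lemma Setup.qvMB (S : Setup μ q g σm σp) (v : X) : IsMB (fun u => q u v) :=
  ⟨S.qm.comp (measurable_id.prodMk measurable_const), σp, fun u => S.q_abs u v⟩

lemma Setup.qMB2 (S : Setup μ q g σm σp) : IsMB2 q :=
  ⟨S.qm, σp, fun u v => S.q_abs u v⟩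

lemma filt_q_lb (S : Setup μ q g σm σp) (v : X) :
    σm * filt μ ν q g ys k (fun _ => (1 : ℝ)) ≤ filt μ ν q g ys k (fun u => q u v) := by
  have h1 : filt μ ν q g ys k (fun u => σm * (1 : ℝ)) ≤ filt μ ν q g ys k (fun u => q u v) := by
    apply filt_mono S k _ _ (IsMB.const _) (S.qvMB v)
    intro u
    simpa using S.ql u v
  rwa [filt_const_mul S k σm (fun _ => 1) (IsMB.const 1)] at h1

lemma filt_q_pos (S : Setup μ q g σm σp) (hν0 : 0 < ∫ x, g x (ys 0) ∂ν) (v : X) :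
    0 < filt μ ν q g ys k (fun u => q u v) :=
  lt_of_lt_of_le (mul_pos S.hσm (filt_one_pos S hν0 k)) (filt_q_lb S v)

lemma alphaF_isMB (S : Setup μ q g σm σp) : ∀ t, IsMB (alphaF μ ν q g ys k t) := by
  intro t
  induction t with
  | zero => exact (S.gMB _).mul (filt_param S k S.qMB2)
  | succ t ih =>
    obtain ⟨Ca, hCa⟩ := ih.2
    refine (S.gMB _).mul (isMB_integral_left (μ := μ)
      (fun u v => alphaF μ ν q g ys k t u * q u v)
      ((ih.meas.comp measurable_fst).mul S.qm) (Ca * σp) ?_)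
    intro u v
    rw [abs_mul]
    exact mul_le_mul (hCa u) (S.q_abs u v) (abs_nonneg _)
      (le_trans (abs_nonneg _) (hCa u))

lemma alphaF_nonneg (S : Setup μ q g σm σp) : ∀ t v, 0 ≤ alphaF μ ν q g ys k t v := by
  intro t
  induction t with
  | zero =>
    intro v
    exact mul_nonneg (S.g0 _ _) (filt_nonneg S k (S.qvMB v) (fun u => S.q_nonneg u v))
  | succ t ih =>
    intro v
    exact mul_nonneg (S.g0 _ _)
      (integral_nonneg (fun u => mul_nonneg (ih u) (S.q_nonneg u v)))

lemma alphaF_int_pos (S : Setup μ q g σm σp) (hν0 : 0 < ∫ x, g x (ys 0) ∂ν) :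
    ∀ t, 0 < ∫ v, alphaF μ ν q g ys k t v ∂μ := by
  intro t
  induction t with
  | zero =>
    have h1 : (∫ v, g v (ys (k + 1)) * (σm * filt μ ν q g ys k (fun _ => (1:ℝ))) ∂μ) ≤
        ∫ v, alphaF μ ν q g ys k 0 v ∂μ := by
      apply integral_mono ((S.gMB _).mul (IsMB.const _)).integrable (alphaF_isMB S 0).integrable
      intro v
      exact mul_le_mul_of_nonneg_left (filt_q_lb S v) (S.g0 v _)
    have h2 : (∫ v, g v (ys (k + 1)) * (σm * filt μ ν q g ys k (fun _ => (1:ℝ))) ∂μ) =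
        (σm * filt μ ν q g ys k (fun _ => (1:ℝ))) * ∫ v, g v (ys (k + 1)) ∂μ := by
      rw [integral_mul_const]; ring
    calc (0:ℝ) < (σm * filt μ ν q g ys k (fun _ => (1:ℝ))) * ∫ v, g v (ys (k + 1)) ∂μ :=
          mul_pos (mul_pos S.hσm (filt_one_pos S hν0 k)) (S.gp _)
      _ = _ := h2.symm
      _ ≤ _ := h1
  | succ t ih =>
    have hlb : ∀ v, σm * (∫ u, alphaF μ ν q g ys k t u ∂μ) ≤
        ∫ u, alphaF μ ν q g ys k t u * q u v ∂μ := by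
      intro v
      have h1 : (∫ u, alphaF μ ν q g ys k t u * σm ∂μ) ≤
          ∫ u, alphaF μ ν q g ys k t u * q u v ∂μ := by
        apply integral_mono ((alphaF_isMB S t).mul (IsMB.const _)).integrable
          ((alphaF_isMB S t).mul (S.qvMB v)).integrable
        intro u
        exact mul_le_mul_of_nonneg_left (S.ql u v) (alphaF_nonneg S t u)
      rw [integral_mul_const] at h1
      linarith [h1]
    have hintMB : IsMB (fun v => ∫ u, alphaF μ ν q g ys k t u * q u v ∂μ) := by
      obtain ⟨Ca, hCa⟩ := (alphaF_isMB (ν := ν) (ys := ys) (k := k) S t).2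
      apply isMB_integral_left (μ := μ) (fun u v => alphaF μ ν q g ys k t u * q u v)
        (((alphaF_isMB S t).meas.comp measurable_fst).mul S.qm) (Ca * σp)
      intro u v
      rw [abs_mul]
      exact mul_le_mul (hCa u) (S.q_abs u v) (abs_nonneg _) (le_trans (abs_nonneg _) (hCa u))
    have h1 : (∫ v, g v (ys (k + 1 + t + 1)) * (σm * ∫ u, alphaF μ ν q g ys k t u ∂μ) ∂μ) ≤
        ∫ v, alphaF μ ν q g ys k (t + 1) v ∂μ := by
      apply integral_mono ((S.gMB _).mul (IsMB.const _)).integrable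
        (alphaF_isMB S (t + 1)).integrable
      intro v
      exact mul_le_mul_of_nonneg_left (hlb v) (S.g0 v _)
    have h2 : (∫ v, g v (ys (k + 1 + t + 1)) * (σm * ∫ u, alphaF μ ν q g ys k t u ∂μ) ∂μ) =
        (σm * ∫ u, alphaF μ ν q g ys k t u ∂μ) * ∫ v, g v (ys (k + 1 + t + 1)) ∂μ := by
      rw [integral_mul_const]; ring
    calc (0:ℝ) < (σm * ∫ u, alphaF μ ν q g ys k t u ∂μ) * ∫ v, g v (ys (k + 1 + t + 1)) ∂μ :=
          mul_pos (mul_pos S.hσm ih) (S.gp _)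
      _ = _ := h2.symm
      _ ≤ _ := h1

lemma denom_lb (S : Setup μ q g σm σp) (t : ℕ) (v : X) :
    σm * (∫ u, alphaF μ ν q g ys k t u ∂μ) ≤ ∫ u, alphaF μ ν q g ys k t u * q u v ∂μ := by
  have h1 : (∫ u, alphaF μ ν q g ys k t u * σm ∂μ) ≤
      ∫ u, alphaF μ ν q g ys k t u * q u v ∂μ := by
    apply integral_mono ((alphaF_isMB S t).mul (IsMB.const _)).integrable
      ((alphaF_isMB S t).mul (S.qvMB v)).integrable
    intro u
    exact mul_le_mul_of_nonneg_left (S.ql u v) (alphaF_nonneg S t u)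
  rw [integral_mul_const] at h1
  linarith [h1]

lemma denom_pos (S : Setup μ q g σm σp) (hν0 : 0 < ∫ x, g x (ys 0) ∂ν) (t : ℕ) (v : X) :
    0 < ∫ u, alphaF μ ν q g ys k t u * q u v ∂μ :=
  lt_of_lt_of_le (mul_pos S.hσm (alphaF_int_pos S hν0 t)) (denom_lb S t v)

lemma denom_isMB (S : Setup μ q g σm σp) (t : ℕ) :
    IsMB (fun v => ∫ u, alphaF μ ν q g ys k t u * q u v ∂μ) := by
  obtain ⟨Ca, hCa⟩ := (alphaF_isMB (ν := ν) (ys := ys) (k := k) S t).2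
  apply isMB_integral_left (μ := μ) (fun u v => alphaF μ ν q g ys k t u * q u v)
    (((alphaF_isMB S t).meas.comp measurable_fst).mul S.qm) (Ca * σp)
  intro u v
  rw [abs_mul]
  exact mul_le_mul (hCa u) (S.q_abs u v) (abs_nonneg _) (le_trans (abs_nonneg _) (hCa u))

lemma abs_integral_le' {α : Type*} [MeasurableSpace α] {μ' : Measure α} (f : α → ℝ) :
    |∫ x, f x ∂μ'| ≤ ∫ x, |f x| ∂μ' := by
  simpa only [Real.norm_eq_abs] using norm_integral_le_integral_norm (μ := μ') f

lemma HFun_isMB_bdd (S : Setup μ q g σm σp) (hν0 : 0 < ∫ x, g x (ys 0) ∂ν)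
    {s : X → X → ℝ} (hs : IsMB2 s) {Cs : ℝ} (hCs : ∀ a b, |s a b| ≤ Cs) :
    ∀ t, IsMB (HFun μ ν q g ys s k t) ∧ ∀ v, |HFun μ ν q g ys s k t v| ≤ Cs := by
  intro t
  induction t with
  | zero =>
    have hqs : IsMB2 (fun u v => q u v * s u v) := by
      refine ⟨S.qm.mul hs.1, σp * Cs, fun u v => ?_⟩
      rw [abs_mul]
      exact mul_le_mul (S.q_abs u v) (hCs u v) (abs_nonneg _) (le_of_lt S.hσp)
    have hnum : IsMB (fun v => filt μ ν q g ys k (fun u => q u v * s u v)) :=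
      filt_param S k hqs
    have hden : IsMB (fun v => filt μ ν q g ys k (fun u => q u v)) :=
      filt_param S k S.qMB2
    have hbd : ∀ v, |HFun μ ν q g ys s k 0 v| ≤ Cs := by
      intro v
      have hdp := filt_q_pos (ys := ys) (k := k) S hν0 v
      have hsv : IsMB (fun u => s u v) :=
        ⟨hs.1.comp (measurable_id.prodMk measurable_const), Cs, fun u => hCs u v⟩
      have habs : |filt μ ν q g ys k (fun u => q u v * s u v)| ≤
          filt μ ν q g ys k (fun u => Cs * q u v) := by
        apply filt_abs_le S k ((S.qvMB v).mul hsv) ((IsMB.const Cs).mul (S.qvMB v))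
        intro u
        rw [abs_mul, abs_of_nonneg (S.q_nonneg u v)]
        calc q u v * |s u v| ≤ q u v * Cs :=
              mul_le_mul_of_nonneg_left (hCs u v) (S.q_nonneg u v)
          _ = Cs * q u v := by ring
      rw [filt_const_mul S k Cs (fun u => q u v) (S.qvMB v)] at habs
      show |filt μ ν q g ys k (fun u => q u v * s u v) /
          filt μ ν q g ys k (fun u => q u v)| ≤ Cs
      rw [abs_div, abs_of_pos hdp, div_le_iff₀ hdp]
      exact habs
    exact ⟨⟨hnum.meas.div hden.meas, Cs, hbd⟩, hbd⟩
  | succ t ih =>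
    obtain ⟨ihMB, ihbd⟩ := ih
    have hαMB := alphaF_isMB (ν := ν) (ys := ys) (k := k) S t
    obtain ⟨Ca, hCa⟩ := hαMB.2
    have hnum : IsMB (fun v =>
        ∫ u, alphaF μ ν q g ys k t u * q u v * HFun μ ν q g ys s k t u ∂μ) := by
      apply isMB_integral_left (μ := μ)
        (fun u v => alphaF μ ν q g ys k t u * q u v * HFun μ ν q g ys s k t u)
        (((hαMB.meas.comp measurable_fst).mul S.qm).mul (ihMB.meas.comp measurable_fst))
        (Ca * σp * Cs)
      intro u v
      exact abs_mul3_le (hCa u) (S.q_abs u v) (ihbd u)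
    have hden := denom_isMB (ν := ν) (ys := ys) (k := k) S t
    have hbd : ∀ v, |HFun μ ν q g ys s k (t + 1) v| ≤ Cs := by
      intro v
      have hdp := denom_pos (ys := ys) (k := k) S hν0 t v
      have habs : |∫ u, alphaF μ ν q g ys k t u * q u v * HFun μ ν q g ys s k t u ∂μ| ≤
          Cs * ∫ u, alphaF μ ν q g ys k t u * q u v ∂μ := by
      
        have h1 := abs_integral_le' (μ' := μ)
          (fun u => alphaF μ ν q g ys k t u * q u v * HFun μ ν q g ys s k t u)
        have h2 : (∫ u, |alphaF μ ν q g ys k t u * q u v * HFun μ ν q g ys s k t u| ∂μ) ≤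
            ∫ u, Cs * (alphaF μ ν q g ys k t u * q u v) ∂μ := by
          apply integral_mono (((hαMB.mul (S.qvMB v)).mul ihMB).abs').integrable
            ((IsMB.const Cs).mul (hαMB.mul (S.qvMB v))).integrable
          intro u
          dsimp only
          rw [abs_mul, abs_mul, abs_of_nonneg (alphaF_nonneg S t u),
            abs_of_nonneg (S.q_nonneg u v)]
          calc alphaF μ ν q g ys k t u * q u v * |HFun μ ν q g ys s k t u|
              ≤ alphaF μ ν q g ys k t u * q u v * Cs := by
                apply mul_le_mul_of_nonneg_left (ihbd u)
                exact mul_nonneg (alphaF_nonneg S t u) (S.q_nonneg u v)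
            _ = Cs * (alphaF μ ν q g ys k t u * q u v) := by ring
        rw [integral_const_mul] at h2
        linarith
      show |(∫ u, alphaF μ ν q g ys k t u * q u v * HFun μ ν q g ys s k t u ∂μ) /
          (∫ u, alphaF μ ν q g ys k t u * q u v ∂μ)| ≤ Cs
      rw [abs_div, abs_of_pos hdp, div_le_iff₀ hdp]
      exact habs
    exact ⟨⟨hnum.meas.div hden.meas, Cs, hbd⟩, hbd⟩

lemma HFun_one (S : Setup μ q g σm σp) (hν0 : 0 < ∫ x, g x (ys 0) ∂ν) :
    ∀ t v, HFun μ ν q g ys (fun _ _ => (1 : ℝ)) k t v = 1 := by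
  intro t
  induction t with
  | zero =>
    intro v
    show filt μ ν q g ys k (fun u => q u v * 1) / filt μ ν q g ys k (fun u => q u v) = 1
    simp only [mul_one]
    exact div_self (ne_of_gt (filt_q_pos S hν0 v))
  | succ t ih =>
    intro v
    show (∫ u, alphaF μ ν q g ys k t u * q u v * HFun μ ν q g ys (fun _ _ => 1) k t u ∂μ) /
        (∫ u, alphaF μ ν q g ys k t u * q u v ∂μ) = 1
    have h1 : (fun u => alphaF μ ν q g ys k t u * q u v * HFun μ ν q g ys (fun _ _ => (1:ℝ)) k t u)
        = fun u => alphaF μ ν q g ys k t u * q u v := by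
      funext u
      rw [ih u, mul_one]
    rw [h1]
    exact div_self (ne_of_gt (denom_pos S hν0 t v))

lemma HFun_osc (S : Setup μ q g σm σp) (hν0 : 0 < ∫ x, g x (ys 0) ∂ν)
    {s : X → X → ℝ} (hs : IsMB2 s) {Cs : ℝ} (hCs : ∀ a b, |s a b| ≤ Cs) :
    ∀ t x y, |HFun μ ν q g ys s k t x - HFun μ ν q g ys s k t y| ≤
      2 * Cs * (1 - σm / σp) ^ t := by
  obtain ⟨z₀⟩ := nonempty_of_prob μ
  have hσmp : σm ≤ σp := le_trans (S.ql z₀ z₀) (S.qu z₀ z₀)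
  have hρ0 : 0 ≤ 1 - σm / σp := by
    have h1 : σm / σp ≤ 1 := by
      rw [div_le_one S.hσp]; exact hσmp
    linarith
  have hρ1 : 1 - σm / σp < 1 := by
    have h1 : 0 < σm / σp := div_pos S.hσm S.hσp
    linarith
  intro t
  induction t with
  | zero =>
    intro x y
    obtain ⟨_, hbd⟩ := HFun_isMB_bdd S hν0 hs hCs 0
    rw [pow_zero, mul_one]
    calc |HFun μ ν q g ys s k 0 x - HFun μ ν q g ys s k 0 y|
        ≤ |HFun μ ν q g ys s k 0 x - 0| + |0 - HFun μ ν q g ys s k 0 y| := abs_sub_le _ 0 _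
      _ = |HFun μ ν q g ys s k 0 x| + |HFun μ ν q g ys s k 0 y| := by
          rw [sub_zero, zero_sub, abs_neg]
      _ ≤ Cs + Cs := add_le_add (hbd x) (hbd y)
      _ = 2 * Cs := by ring
  | succ t ih =>
    intro x y
    obtain ⟨ihMB, _⟩ := HFun_isMB_bdd S hν0 hs hCs t
    have hr : ∀ z u w : X, (1 - (1 - σm / σp)) * q w z ≤ q u z := by
      intro z u w
      have he : (1 : ℝ) - (1 - σm / σp) = σm / σp := by ring
      rw [he]
      calc σm / σp * q w z ≤ σm / σp * σp :=
            mul_le_mul_of_nonneg_left (S.qu w z)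
              (div_nonneg (le_of_lt S.hσm) (le_of_lt S.hσp))
        _ = σm := div_mul_cancel₀ σm (ne_of_gt S.hσp)
        _ ≤ q u z := S.ql u z
    have hcore := tv_core (μ := μ) (P := alphaF μ ν q g ys k t)
      (γ₁ := fun u => q u x) (γ₂ := fun u => q u y) (H := HFun μ ν q g ys s k t)
      (ρ := 1 - σm / σp) (D := 2 * Cs * (1 - σm / σp) ^ t)
      (alphaF_isMB S t) (alphaF_nonneg S t) (S.qvMB x) (S.qvMB y) ihMB hρ0 hρ1
      (fun a b => hr x a b) (fun a b => hr y a b)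
      (denom_pos S hν0 t x) (denom_pos S hν0 t y) ih
    refine le_trans ?_ (le_of_eq (show (1 - σm / σp) * (2 * Cs * (1 - σm / σp) ^ t)
      = 2 * Cs * (1 - σm / σp) ^ (t + 1) from by ring))
    exact hcore

lemma transfer (S : Setup μ q g σm σp) (hν0 : 0 < ∫ x, g x (ys 0) ∂ν)
    {s : X → X → ℝ} (hs : IsMB2 s) {Cs : ℝ} (hCs : ∀ a b, |s a b| ≤ Cs) :
    ∀ (j t : ℕ) (γ : X → ℝ), IsMB γ → (∀ x, 0 ≤ γ x) →
      (∫ v, alphaF μ ν q g ys k t v * bwg μ q g ys γ j (k + 1 + t) v *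
          HFun μ ν q g ys s k t v ∂μ)
        = ∫ v, alphaF μ ν q g ys k (t + j) v * γ v *
            HFun μ ν q g ys s k (t + j) v ∂μ := by
  intro j
  induction j with
  | zero => intro t γ hγ hγ0; simp [bwg]
  | succ j ih =>
    intro t γ hγ hγ0
    obtain ⟨HtMB, Htbd⟩ := HFun_isMB_bdd S hν0 hs hCs t
    have hαMB := alphaF_isMB (ν := ν) (ys := ys) (k := k) S t
    have hBMB := bwg_isMB (ys := ys) S hγ j (k + 1 + t + 1)
    obtain ⟨Ca, hCa⟩ := hαMB.2
    obtain ⟨Cb, hCb⟩ := hBMB.2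
    obtain ⟨Cg2, hCg2⟩ := (S.gMB (ys (k + 1 + t + 1))).2
    have h1 : (∫ v, alphaF μ ν q g ys k t v * bwg μ q g ys γ (j + 1) (k + 1 + t) v *
          HFun μ ν q g ys s k t v ∂μ)
        = ∫ v, ∫ w, (alphaF μ ν q g ys k t v * HFun μ ν q g ys s k t v) *
            (g w (ys (k + 1 + t + 1)) * q v w * bwg μ q g ys γ j (k + 1 + t + 1) w) ∂μ ∂μ := by
      congr 1
      funext v
      show alphaF μ ν q g ys k t v *
          (∫ w, g w (ys (k + 1 + t + 1)) * q v w * bwg μ q g ys γ j (k + 1 + t + 1) w ∂μ) *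
          HFun μ ν q g ys s k t v = _
      rw [show alphaF μ ν q g ys k t v *
          (∫ w, g w (ys (k + 1 + t + 1)) * q v w * bwg μ q g ys γ j (k + 1 + t + 1) w ∂μ) *
          HFun μ ν q g ys s k t v
        = (alphaF μ ν q g ys k t v * HFun μ ν q g ys s k t v) *
          (∫ w, g w (ys (k + 1 + t + 1)) * q v w * bwg μ q g ys γ j (k + 1 + t + 1) w ∂μ)
        from by ring, ← integral_const_mul]
    have h2 : (∫ v, ∫ w, (alphaF μ ν q g ys k t v * HFun μ ν q g ys s k t v) *
            (g w (ys (k + 1 + t + 1)) * q v w * bwg μ q g ys γ j (k + 1 + t + 1) w) ∂μ ∂μ)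
        = ∫ w, ∫ v, (alphaF μ ν q g ys k t v * HFun μ ν q g ys s k t v) *
            (g w (ys (k + 1 + t + 1)) * q v w * bwg μ q g ys γ j (k + 1 + t + 1) w) ∂μ ∂μ := by
      apply integral_integral_swap
      have hMB : IsMB (fun p : X × X =>
          (alphaF μ ν q g ys k t p.1 * HFun μ ν q g ys s k t p.1) *
          (g p.2 (ys (k + 1 + t + 1)) * q p.1 p.2 *
            bwg μ q g ys γ j (k + 1 + t + 1) p.2)) := by
        constructor
        · exact ((hαMB.meas.comp measurable_fst).mul (HtMB.meas.comp measurable_fst)).mul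
            ((((S.gm _).comp measurable_snd).mul S.qm).mul
              (hBMB.meas.comp measurable_snd))
        · refine ⟨Ca * Cs * (Cg2 * σp * Cb), fun p => ?_⟩
          rw [abs_mul]
          have ha : |alphaF μ ν q g ys k t p.1 * HFun μ ν q g ys s k t p.1| ≤ Ca * Cs := by
            rw [abs_mul]
            exact mul_le_mul (hCa p.1) (Htbd p.1) (abs_nonneg _)
              (le_trans (abs_nonneg _) (hCa p.1))
          have hb : |g p.2 (ys (k + 1 + t + 1)) * q p.1 p.2 *
              bwg μ q g ys γ j (k + 1 + t + 1) p.2| ≤ Cg2 * σp * Cb :=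
            abs_mul3_le (hCg2 p.2) (S.q_abs p.1 p.2) (hCb p.2)
          exact mul_le_mul ha hb (abs_nonneg _) (le_trans (abs_nonneg _) ha)
      exact hMB.integrable
    have h3 : (∫ w, ∫ v, (alphaF μ ν q g ys k t v * HFun μ ν q g ys s k t v) *
            (g w (ys (k + 1 + t + 1)) * q v w * bwg μ q g ys γ j (k + 1 + t + 1) w) ∂μ ∂μ)
        = ∫ w, alphaF μ ν q g ys k (t + 1) w * bwg μ q g ys γ j (k + 1 + t + 1) w *
            HFun μ ν q g ys s k (t + 1) w ∂μ := by
      congr 1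
      funext w
      have hinner : (∫ v, (alphaF μ ν q g ys k t v * HFun μ ν q g ys s k t v) *
            (g w (ys (k + 1 + t + 1)) * q v w * bwg μ q g ys γ j (k + 1 + t + 1) w) ∂μ)
          = (g w (ys (k + 1 + t + 1)) * bwg μ q g ys γ j (k + 1 + t + 1) w) *
            ∫ v, alphaF μ ν q g ys k t v * q v w * HFun μ ν q g ys s k t v ∂μ := by
        rw [← integral_const_mul]
        congr 1
        funext v
        ring
      rw [hinner]
      have hdp := denom_pos (ys := ys) (k := k) S hν0 t w
      show _ = (g w (ys (k + 1 + t + 1)) * ∫ u, alphaF μ ν q g ys k t u * q u w ∂μ) *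
          bwg μ q g ys γ j (k + 1 + t + 1) w *
          ((∫ u, alphaF μ ν q g ys k t u * q u w * HFun μ ν q g ys s k t u ∂μ) /
            (∫ u, alphaF μ ν q g ys k t u * q u w ∂μ))
      field_simp
    have h4 := ih (t + 1) γ hγ hγ0
    have ht : t + 1 + j = t + (j + 1) := by omega
    rw [ht] at h4
    calc (∫ v, alphaF μ ν q g ys k t v * bwg μ q g ys γ (j + 1) (k + 1 + t) v *
          HFun μ ν q g ys s k t v ∂μ) = _ := h1
      _ = _ := h2
      _ = _ := h3
      _ = _ := h4

end AlphaH

section LFred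

variable {μ ν : Measure X} [IsProbabilityMeasure μ] [IsProbabilityMeasure ν]
variable {q : X → X → ℝ} {g : X → Y → ℝ} {ys : ℕ → Y} {σm σp : ℝ}

/-- Tail factorization: once all coordinates above `k+1` are being integrated,
the statistic factors out and the remaining integral is the backward function. -/
lemma LF_tail (S : Setup μ q g σm σp) (s : X → X → ℝ) (k m : ℕ) :
    ∀ (j : ℕ), k + 1 + j ≤ m → ∀ (x : ℕ → X),
      LF μ q g ys m j (fun z => s (z k) (z (k + 1))) x =
        s (x k) (x (k + 1)) *
          bwg μ q g ys (fun _ => (1 : ℝ)) j (m - j) (x (m - j)) := by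
  intro j
  induction j with
  | zero =>
    intro hj x
    simp [LF, bwg]
  | succ j ih =>
    intro hj x
    have e1 : m - (j + 1) + 1 = m - j := by omega
    have e2 : m - j - 1 = m - (j + 1) := by omega
    have hk1 : (k : ℕ) ≠ m - j := by omega
    have hk2 : (k + 1 : ℕ) ≠ m - j := by omega
    simp only [LF, bwg]
    rw [e1, e2, ← integral_const_mul]
    congr 1
    funext x'
    rw [ih (by omega) (Function.update x (m - j) x')]
    rw [Function.update_of_ne hk1, Function.update_of_ne hk2]
    have e3 : m - j = m - j := rfl
    rw [show Function.update x (m - j) x' (m - j) = x' from Function.update_self _ _ _]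
    ring

/-- The value of `LF` at level `j` with `m - j ≤ k` depends on the path only
through its coordinate `m - j`. -/
lemma LF_dep (S : Setup μ q g σm σp) (s : X → X → ℝ) (k m : ℕ) (hkm : k + 1 ≤ m) :
    ∀ (j : ℕ), j ≤ m → m - j ≤ k → ∀ (x x' : ℕ → X), x (m - j) = x' (m - j) →
      LF μ q g ys m j (fun z => s (z k) (z (k + 1))) x =
        LF μ q g ys m j (fun z => s (z k) (z (k + 1))) x' := by
  intro j
  induction j with
  | zero => intro h1 h2; omega
  | succ j ih =>
    intro hjm hmk x x' hx
    simp only [LF]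
    have hxq : x (m - j - 1) = x' (m - j - 1) := by
      rw [show m - j - 1 = m - (j + 1) from by omega]
      exact hx
    rw [hxq]
    congr 1
    funext w
    congr 1
    rcases Nat.lt_or_ge (m - j) (k + 1) with hlt | hge
    · exact ih (by omega) (by omega) (Function.update x (m - j) w)
        (Function.update x' (m - j) w)
        (by rw [Function.update_self, Function.update_self])
    · have hmj : m - j = k + 1 := by omega
      rw [LF_tail S s k m j (by omega) (Function.update x (m - j) w),
        LF_tail S s k m j (by omega) (Function.update x' (m - j) w), hmj]
      rw [Function.update_of_ne (by omega : (k : ℕ) ≠ k + 1),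
        Function.update_of_ne (by omega : (k : ℕ) ≠ k + 1),
        Function.update_self, Function.update_self]
      have hxk : x k = x' k := by
        rw [show k = m - (j + 1) from by omega]
        exact hx
      rw [hxk]

/-- Chain the first `i` integrations into `filt`. -/
lemma LF_front (S : Setup μ q g σm σp) (s : X → X → ℝ) (k m : ℕ) (hkm : k + 1 ≤ m) :
    ∀ i, i ≤ k →
      (∫ x₀, g x₀ (ys 0) *
          LF μ q g ys m m (fun z => s (z k) (z (k + 1))) (fun _ => x₀) ∂ν)
        = filt μ ν q g ys i
            (fun u => LF μ q g ys m (m - i) (fun z => s (z k) (z (k + 1))) (fun _ => u)) := by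
  intro i
  induction i with
  | zero => intro _; rfl
  | succ i ih =>
    intro hik
    rw [ih (by omega)]
    show _ = filt μ ν q g ys i (fun u => ∫ v, g v (ys (i + 1)) * q u v *
      LF μ q g ys m (m - (i + 1)) (fun z => s (z k) (z (k + 1))) (fun _ => v) ∂μ)
    congr 1
    funext u
    have e : m - i = (m - (i + 1)) + 1 := by omega
    have e2 : m - (m - (i + 1)) = i + 1 := by omega
    rw [e]
    simp only [LF]
    rw [e2]
    congr 1
    funext v
    congr 1
    apply LF_dep S s k m hkm (m - (i + 1)) (by omega) (by omega)
    rw [e2, Function.update_self]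

/-- numerator reduction to the pair-marginal form. -/
lemma numer_eq (S : Setup μ q g σm σp) (hν0 : 0 < ∫ x, g x (ys 0) ∂ν)
    {s : X → X → ℝ} (hs : IsMB2 s) {Cs : ℝ} (hCs : ∀ a b, |s a b| ≤ Cs)
    (k m : ℕ) (hkm : k + 1 ≤ m) :
    (∫ x₀, g x₀ (ys 0) *
        LF μ q g ys m m (fun z => s (z k) (z (k + 1))) (fun _ => x₀) ∂ν)
      = ∫ v, alphaF μ ν q g ys k 0 v *
          bwg μ q g ys (fun _ => (1 : ℝ)) (m - k - 1) (k + 1) v *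
          HFun μ ν q g ys s k 0 v ∂μ := by
  obtain ⟨Cs', hCs'⟩ := hs.2
  obtain ⟨Cb, hCb⟩ := (bwg_isMB (ys := ys) S (IsMB.const 1) (m - (k + 1)) (k + 1)).2
  obtain ⟨Cg, hCg⟩ := (S.gMB (ys (k + 1))).2
  rw [LF_front S s k m hkm k le_rfl]
  have hstep : (fun u => LF μ q g ys m (m - k) (fun z => s (z k) (z (k + 1))) (fun _ => u)) =
      (fun u => ∫ v, g v (ys (k + 1)) * q u v *
        (s u v * bwg μ q g ys (fun _ => (1 : ℝ)) (m - (k + 1)) (k + 1) v) ∂μ) := by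
    funext u
    have e : m - k = (m - (k + 1)) + 1 := by omega
    have e2 : m - (m - (k + 1)) = k + 1 := by omega
    rw [e]
    simp only [LF]
    rw [e2]
    congr 1
    funext v
    rw [LF_tail S s k m (m - (k + 1)) (by omega) _, e2]
    rw [Function.update_of_ne (by omega : (k : ℕ) ≠ k + 1), Function.update_self]
  rw [hstep]
  have hF2 : IsMB2 (fun u v => g v (ys (k + 1)) * q u v *
      (s u v * bwg μ q g ys (fun _ => (1 : ℝ)) (m - (k + 1)) (k + 1) v)) := by
    constructor
    · exact (((S.gm _).comp measurable_snd).mul S.qm).mul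
        (hs.1.mul ((bwg_isMB (ys := ys) S (IsMB.const 1) (m - (k + 1)) (k + 1)).meas.comp
          measurable_snd))
    · refine ⟨Cg * σp * (Cs' * Cb), fun u v => ?_⟩
      apply abs_mul3_le (hCg v) (S.q_abs u v)
      rw [abs_mul]
      exact mul_le_mul (hCs' u v) (hCb v) (abs_nonneg _)
        (le_trans (abs_nonneg _) (hCs' u v))
  rw [filt_swap S k hF2]
  have e4 : m - k - 1 = m - (k + 1) := by omega
  rw [e4]
  congr 1
  funext v
  have hpull : (fun u => g v (ys (k + 1)) * q u v *
      (s u v * bwg μ q g ys (fun _ => (1 : ℝ)) (m - (k + 1)) (k + 1) v)) =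
      (fun u => (g v (ys (k + 1)) * bwg μ q g ys (fun _ => (1 : ℝ)) (m - (k + 1)) (k + 1) v) *
        (q u v * s u v)) := by
    funext u
    ring
  have hsv : IsMB (fun u => s u v) :=
    ⟨hs.1.comp (measurable_id.prodMk measurable_const), Cs', fun u => hCs' u v⟩
  rw [hpull, filt_const_mul S k _ _ ((S.qvMB v).mul hsv)]
  show _ = g v (ys (k + 1)) * filt μ ν q g ys k (fun u => q u v) *
      bwg μ q g ys (fun _ => (1 : ℝ)) (m - (k + 1)) (k + 1) v *
      (filt μ ν q g ys k (fun u => q u v * s u v) / filt μ ν q g ys k (fun u => q u v))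
  have hA := filt_q_pos (ys := ys) (k := k) S hν0 v
  field_simp

end LFred





/-- **Inequality (A.14).** -/
theorem fixed_lag_forgetting_bound
    (μ : Measure X) [IsProbabilityMeasure μ]
    (q : X → X → ℝ) (g : X → Y → ℝ) (ys : ℕ → Y)
    (σm σp : ℝ)
    (hσm : 0 < σm)
    (hq_meas : Measurable (Function.uncurry q))
    (hq_low : ∀ a b, σm ≤ q a b) (hq_up : ∀ a b, q a b ≤ σp)
    (hg_meas : ∀ yv, Measurable fun x => g x yv)
    (hg_nonneg : ∀ x yv, 0 ≤ g x yv)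
    (hg_bdd : ∀ yv, ∃ C, ∀ x, g x yv ≤ C)
    (hg_pos : ∀ yv, 0 < ∫ x, g x yv ∂μ)
    (ν : Measure X) [IsProbabilityMeasure ν]
    (k Δ n : ℕ) (hΔ : 1 ≤ Δ) (hkΔn : k + Δ ≤ n)
    (s : X → X → ℝ) (hs_meas : Measurable (Function.uncurry s))
    (Cs : ℝ) (hCs : ∀ a b, |s a b| ≤ Cs) :
    |smoothExp μ ν q g ys (k + Δ) (fun x => s (x k) (x (k + 1))) -
        smoothExp μ ν q g ys n (fun x => s (x k) (x (k + 1)))| ≤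
      2 * (1 - σm / σp) ^ Δ * Cs := by
  obtain ⟨x₀⟩ := nonempty_of_prob μ
  have hσp : 0 < σp := lt_of_lt_of_le hσm (le_trans (hq_low x₀ x₀) (hq_up x₀ x₀))
  have hCs0 : 0 ≤ Cs := le_trans (abs_nonneg _) (hCs x₀ x₀)
  have hσmp : σm ≤ σp := le_trans (hq_low x₀ x₀) (hq_up x₀ x₀)
  have hρ0 : 0 ≤ 1 - σm / σp := by
    have h1 : σm / σp ≤ 1 := by rw [div_le_one hσp]; exact hσmp
    linarith
  have hρ1 : 1 - σm / σp < 1 := by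
    have h1 : 0 < σm / σp := div_pos hσm hσp
    linarith
  have S : Setup μ q g σm σp :=
    ⟨hσm, hσp, hq_meas, hq_low, hq_up, hg_meas, hg_nonneg, hg_bdd, hg_pos⟩
  by_cases hν0 : 0 < ∫ x, g x (ys 0) ∂ν
  swap
  · have hg0 : (∫ x, g x (ys 0) ∂ν) = 0 :=
      le_antisymm (not_lt.mp hν0) (integral_nonneg (fun x => hg_nonneg x (ys 0)))
    have hae : (fun x => g x (ys 0)) =ᵐ[ν] 0 :=
      (integral_eq_zero_iff_of_nonneg (fun x => hg_nonneg x (ys 0))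
        (S.gMB (ys 0)).integrable).mp hg0
    have hzero : ∀ (m : ℕ) (f : (ℕ → X) → ℝ),
        (∫ y₀, g y₀ (ys 0) * LF μ q g ys m m f (fun _ => y₀) ∂ν) = 0 := by
      intro m f
      have h1 : (fun y₀ => g y₀ (ys 0) * LF μ q g ys m m f (fun _ => y₀)) =ᵐ[ν]
          (fun _ => (0 : ℝ)) := by
        filter_upwards [hae] with x hx
        simp only [Pi.zero_apply] at hx
        rw [hx, zero_mul]
      rw [integral_congr_ae h1, integral_zero]
    simp only [smoothExp, hzero, zero_div, sub_zero, abs_zero]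
    exact mul_nonneg (mul_nonneg (by norm_num) (pow_nonneg hρ0 Δ)) hCs0
  · have hs2 : IsMB2 s := ⟨hs_meas, Cs, hCs⟩
    have h1MB2 : IsMB2 (fun _ _ : X => (1 : ℝ)) :=
      ⟨measurable_const, 1, fun _ _ => by norm_num⟩
    have h1bd : ∀ a b : X, |(fun _ _ : X => (1 : ℝ)) a b| ≤ 1 := fun _ _ => by norm_num
    have hkm1 : k + 1 ≤ k + Δ := by omega
    have hkm2 : k + 1 ≤ n := by omega
    have e1 : k + Δ - k - 1 = Δ - 1 := by omega
    have e2 : n - k - 1 = (Δ - 1) + (n - (k + Δ)) := by omega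
    have e3 : (k + 1) + (Δ - 1) = k + Δ := by omega
    have e0 : 0 + (Δ - 1) = Δ - 1 := by omega
    set γ2 := bwg μ q g ys (fun _ => (1 : ℝ)) (n - (k + Δ)) (k + Δ) with hγ2def
    have hγ2MB : IsMB γ2 := bwg_isMB S (IsMB.const 1) _ _
    have hγ2nn : ∀ x, 0 ≤ γ2 x := bwg_nonneg S (fun _ => zero_le_one) _ _
    have hsplit : bwg μ q g ys (fun _ => (1 : ℝ)) (n - k - 1) (k + 1) =
        bwg μ q g ys γ2 (Δ - 1) (k + 1) := by
      rw [e2, bwg_split S (Δ - 1) (n - (k + Δ)) (k + 1), e3]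
    have main : ∀ (s' : X → X → ℝ), IsMB2 s' → ∀ (C' : ℝ), (∀ a b, |s' a b| ≤ C') →
        ((∫ y₀, g y₀ (ys 0) * LF μ q g ys (k + Δ) (k + Δ)
            (fun z => s' (z k) (z (k + 1))) (fun _ => y₀) ∂ν)
          = ∫ v, alphaF μ ν q g ys k (Δ - 1) v * (fun _ => (1 : ℝ)) v *
              HFun μ ν q g ys s' k (Δ - 1) v ∂μ)
        ∧ ((∫ y₀, g y₀ (ys 0) * LF μ q g ys n n
            (fun z => s' (z k) (z (k + 1))) (fun _ => y₀) ∂ν)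
          = ∫ v, alphaF μ ν q g ys k (Δ - 1) v * γ2 v *
              HFun μ ν q g ys s' k (Δ - 1) v ∂μ) := by
      intro s' hs' C' hC'
      constructor
      · rw [numer_eq S hν0 hs' hC' k (k + Δ) hkm1, e1]
        have ht := transfer (k := k) S hν0 hs' hC' (Δ - 1) 0 (fun _ => (1 : ℝ))
          (IsMB.const 1) (fun _ => zero_le_one)
        rw [e0] at ht
        exact ht
      · rw [numer_eq S hν0 hs' hC' k n hkm2, hsplit]
        have ht := transfer (k := k) S hν0 hs' hC' (Δ - 1) 0 γ2 hγ2MB hγ2nn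
        rw [e0] at ht
        exact ht
    have hN1 := (main s hs2 Cs hCs).1
    have hN2 := (main s hs2 Cs hCs).2
    have hDs := main (fun _ _ => (1 : ℝ)) h1MB2 1 h1bd
    have hD1 : (∫ y₀, g y₀ (ys 0) * LF μ q g ys (k + Δ) (k + Δ)
          (fun _ => (1 : ℝ)) (fun _ => y₀) ∂ν)
        = ∫ v, alphaF μ ν q g ys k (Δ - 1) v * (fun _ => (1 : ℝ)) v ∂μ := by
      have h2 : (∫ y₀, g y₀ (ys 0) * LF μ q g ys (k + Δ) (k + Δ)
            (fun _ => (1 : ℝ)) (fun _ => y₀) ∂ν)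
          = ∫ v, alphaF μ ν q g ys k (Δ - 1) v * (fun _ => (1 : ℝ)) v *
              HFun μ ν q g ys (fun _ _ => (1 : ℝ)) k (Δ - 1) v ∂μ := hDs.1
      rw [h2]
      congr 1
      funext v
      rw [HFun_one S hν0 (Δ - 1) v, mul_one]
    have hD2 : (∫ y₀, g y₀ (ys 0) * LF μ q g ys n n
          (fun _ => (1 : ℝ)) (fun _ => y₀) ∂ν)
        = ∫ v, alphaF μ ν q g ys k (Δ - 1) v * γ2 v ∂μ := by
      have h2 : (∫ y₀, g y₀ (ys 0) * LF μ q g ys n n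
            (fun _ => (1 : ℝ)) (fun _ => y₀) ∂ν)
          = ∫ v, alphaF μ ν q g ys k (Δ - 1) v * γ2 v *
              HFun μ ν q g ys (fun _ _ => (1 : ℝ)) k (Δ - 1) v ∂μ := hDs.2
      rw [h2]
      congr 1
      funext v
      rw [HFun_one S hν0 (Δ - 1) v, mul_one]
    have hZ1 : 0 < ∫ v, alphaF μ ν q g ys k (Δ - 1) v * (fun _ => (1 : ℝ)) v ∂μ := by
      have h := alphaF_int_pos (ν := ν) (ys := ys) (k := k) S hν0 (Δ - 1)
      simpa only [mul_one] using h
    have hZ2 : 0 < ∫ v, alphaF μ ν q g ys k (Δ - 1) v * γ2 v ∂μ := by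
      obtain ⟨c, hc, hcle⟩ := bwg_pos (ys := ys) S (n - (k + Δ)) (k + Δ)
      have hlow : (∫ v, alphaF μ ν q g ys k (Δ - 1) v * c ∂μ) ≤
          ∫ v, alphaF μ ν q g ys k (Δ - 1) v * γ2 v ∂μ := by
        apply integral_mono
          ((alphaF_isMB (ν := ν) (ys := ys) (k := k) S (Δ - 1)).mul
            (IsMB.const c)).integrable
          ((alphaF_isMB (ν := ν) (ys := ys) (k := k) S (Δ - 1)).mul hγ2MB).integrable
        intro v
        exact mul_le_mul_of_nonneg_left (hcle v) (alphaF_nonneg S (Δ - 1) v)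
      rw [integral_mul_const] at hlow
      calc (0 : ℝ) < (∫ v, alphaF μ ν q g ys k (Δ - 1) v ∂μ) * c :=
            mul_pos (alphaF_int_pos S hν0 (Δ - 1)) hc
        _ ≤ _ := hlow
    have hr1 : ∀ a b : X, (1 - (1 - σm / σp)) * (fun _ => (1 : ℝ)) b ≤
        (fun _ => (1 : ℝ)) a := by
      intro a b
      dsimp only
      rw [mul_one]
      have he : (1 : ℝ) - (1 - σm / σp) = σm / σp := by ring
      rw [he, div_le_one hσp]
      exact hσmp
    have hr2 : ∀ a b : X, (1 - (1 - σm / σp)) * γ2 b ≤ γ2 a := by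
      intro a b
      have he : (1 : ℝ) - (1 - σm / σp) = σm / σp := by ring
      rw [he]
      exact bwg_ratio S (n - (k + Δ)) (k + Δ) a b
    obtain ⟨HMB, _⟩ := HFun_isMB_bdd S hν0 hs2 hCs (Δ - 1)
    have hosc := HFun_osc (k := k) S hν0 hs2 hCs (Δ - 1)
    have hcore := tv_core (μ := μ) (P := alphaF μ ν q g ys k (Δ - 1))
      (γ₁ := fun _ => (1 : ℝ)) (γ₂ := γ2) (H := HFun μ ν q g ys s k (Δ - 1))
      (ρ := 1 - σm / σp) (D := 2 * Cs * (1 - σm / σp) ^ (Δ - 1))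
      (alphaF_isMB S (Δ - 1)) (alphaF_nonneg S (Δ - 1)) (IsMB.const 1) hγ2MB HMB
      hρ0 hρ1 hr1 hr2 hZ1 hZ2 hosc
    have hsm1 : smoothExp μ ν q g ys (k + Δ) (fun x => s (x k) (x (k + 1)))
        = (∫ v, alphaF μ ν q g ys k (Δ - 1) v * (fun _ => (1 : ℝ)) v *
            HFun μ ν q g ys s k (Δ - 1) v ∂μ) /
          (∫ v, alphaF μ ν q g ys k (Δ - 1) v * (fun _ => (1 : ℝ)) v ∂μ) := by
      simp only [smoothExp]
      rw [hN1, hD1]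
    have hsm2 : smoothExp μ ν q g ys n (fun x => s (x k) (x (k + 1)))
        = (∫ v, alphaF μ ν q g ys k (Δ - 1) v * γ2 v *
            HFun μ ν q g ys s k (Δ - 1) v ∂μ) /
          (∫ v, alphaF μ ν q g ys k (Δ - 1) v * γ2 v ∂μ) := by
      simp only [smoothExp]
      rw [hN2, hD2]
    rw [hsm1, hsm2]
    refine le_trans hcore (le_of_eq ?_)
    have hΔe : Δ - 1 + 1 = Δ := by omega
    conv_rhs => rw [← hΔe, pow_succ]
    ring

end
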